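/- Let G be a finite connected simple graph in which every vertex has even degree. Then there exists a colouring of the edges of G with two colours (black and white) such that every vertex is incident to the same number of black edges as white edges, if and only if the total number of edges of G is even. -/

import Mathlib

set_option linter.unusedSectionVars false

namespace EvenColouring

variable {V : Type*} [DecidableEq V]

/-- signed incidence count at vertex `v` of an alternately-coloured edge list -/
def dsum (v : V) : List (Sym2 V) → ℤ
  | [] => 0
  | e :: L => (if v ∈ e then 1 else 0) - dsum v L

/-- alternating colouring of a list of edges, starting with colour `b`. -/
def acol (v0 : Bool) : List (Sym2 V) → Bool → Sym2 V → Bool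
  | [], _, _ => v0
  | a :: L, b, e => if e = a then b else acol v0 L (!b) e

lemma countP_acol (v : V) : ∀ (L : List (Sym2 V)), L.Nodup → ∀ b : Bool,
    (L.countP (fun e => v ∈ e ∧ acol true L b e = true) : ℤ) -
      (L.countP (fun e => v ∈ e ∧ acol true L b e = false) : ℤ) =
    (if b then dsum v L else - dsum v L) := by
  intro L
  induction L with
  | nil => intro _ b; cases b <;> simp [dsum]
  | cons a L ih =>
    intro hnd b
    have hL : L.Nodup := hnd.of_cons
    have hmem : ∀ e ∈ L, acol true (a :: L) b e = acol true L (!b) e := by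
      intro e he
      have : e ≠ a := fun h => (List.nodup_cons.mp hnd).1 (h ▸ he)
      simp [acol, this]
    have h1 : L.countP (fun e => v ∈ e ∧ acol true (a :: L) b e = true)
        = L.countP (fun e => v ∈ e ∧ acol true L (!b) e = true) :=
      List.countP_congr (fun e he => by simp [hmem e he])
    have h2 : L.countP (fun e => v ∈ e ∧ acol true (a :: L) b e = false)
        = L.countP (fun e => v ∈ e ∧ acol true L (!b) e = false) :=
      List.countP_congr (fun e he => by simp [hmem e he])
    have hacola : acol true (a :: L) b a = b := by simp [acol]
    rw [List.countP_cons, List.countP_cons, h1, h2]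
    push_cast
    have key := ih hL (!b)
    cases b <;> by_cases hv : v ∈ a <;>
      simp [dsum, hacola, hv] at key ⊢ <;> linarith


variable {G : SimpleGraph V}

lemma dsum_walk_edges (v : V) : ∀ {x y : V} (p : G.Walk x y),
    dsum v p.edges = (if v = x then 1 else 0) -
      (if Even p.length then 1 else -1) * (if v = y then 1 else 0) := by
  intro x y p
  induction p with
  | nil => simp [dsum]
  | @cons x a y h q ih =>
    have hxa : x ≠ a := G.ne_of_adj h
    rw [SimpleGraph.Walk.edges_cons]
    show (if v ∈ s(x,a) then (1:ℤ) else 0) - dsum v q.edges = _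
    have hms : (if v ∈ s(x,a) then (1:ℤ) else 0) = (if v = x ∨ v = a then 1 else 0) := by
      simp [Sym2.mem_iff]
    rw [ih, hms, SimpleGraph.Walk.length_cons]
    by_cases he : Even q.length <;>
      simp only [Nat.even_add_one, he, not_true_eq_false, not_false_eq_true,
        if_true, if_false] <;>
      split_ifs <;> first | omega | simp_all

lemma dsum_closed_even (v u : V) (p : G.Walk u u) (hev : Even p.length) :
    dsum v p.edges = 0 := by
  rw [dsum_walk_edges, if_pos hev]
  split_ifs <;> ring

lemma card_toFinset_filter {α : Type*} [DecidableEq α] (L : List α) (hnd : L.Nodup)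
    (P : α → Prop) [DecidablePred P] :
    (L.toFinset.filter P).card = L.countP (fun a => decide (P a)) := by
  have h : L.toFinset.filter P =
      L.toFinset.filter (fun a => (fun b => decide (P b)) a = true) := by simp
  rw [h, ← List.toFinset_filter, List.toFinset_card_of_nodup (hnd.filter _),
    List.countP_eq_length_filter]

end EvenColouring

namespace EvenColouring
open SimpleGraph Finset
variable {V : Type*} [Fintype V] [DecidableEq V] {G : SimpleGraph V} [DecidableRel G.Adj]

lemma exists_adj_notMem {y : V} (L : List (Sym2 V)) (hnd : L.Nodup)
    (hsub : ∀ e ∈ L, e ∈ G.edgeSet) (hodd : ¬ Even (L.countP (fun e => y ∈ e)))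
    (hdeg : Even (G.degree y)) :
    ∃ z, G.Adj y z ∧ s(y, z) ∉ L := by
  classical
  set F : Finset (Sym2 V) := (L.filter (fun e => y ∈ e)).toFinset with hF
  have hndf : (L.filter (fun e => y ∈ e)).Nodup := hnd.filter _
  have hcard : F.card = L.countP (fun e => y ∈ e) := by
    rw [hF, List.toFinset_card_of_nodup hndf, List.countP_eq_length_filter]
  have hFsub : F ⊆ G.incidenceFinset y := by
    intro e he
    rw [hF, List.mem_toFinset, List.mem_filter] at he
    rw [mem_incidenceFinset]
    exact ⟨hsub e he.1, by simpa using he.2⟩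
  have hne : F ≠ G.incidenceFinset y := by
    intro h
    rw [h, card_incidenceFinset_eq_degree] at hcard
    exact hodd (hcard ▸ hdeg)
  obtain ⟨e, he, hef⟩ := Finset.exists_of_ssubset (hFsub.ssubset_of_ne hne)
  rw [mem_incidenceFinset] at he
  obtain ⟨he1, he2⟩ := he
  obtain ⟨z, rfl⟩ := Sym2.mem_iff_exists.mp he2
  refine ⟨z, G.mem_edgeSet.mp he1, fun hmem => hef ?_⟩
  rw [hF, List.mem_toFinset, List.mem_filter]
  exact ⟨hmem, by simp⟩

/-- a nodup list of edges whose length is at least the number of edges covers all edges -/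
lemma covers_of_long (L : List (Sym2 V)) (hnd : L.Nodup)
    (hsub : ∀ e ∈ L, e ∈ G.edgeSet) (hlen : G.edgeFinset.card ≤ L.length) :
    ∀ e ∈ G.edgeSet, e ∈ L := by
  classical
  have hsub' : L.toFinset ⊆ G.edgeFinset := by
    intro e he
    rw [List.mem_toFinset] at he
    exact mem_edgeFinset.mpr (hsub e he)
  have : G.edgeFinset ⊆ L.toFinset :=
    Finset.subset_of_eq (Finset.eq_of_subset_of_card_le hsub'
      (by rwa [List.toFinset_card_of_nodup hnd])).symm
  intro e he
  simpa using this (mem_edgeFinset.mpr he)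

/-- greedy extension: from a nonempty trail avoiding `used`, get a closed trail avoiding `used`. -/
lemma exists_closed_trail (hdeg : ∀ v, Even (G.degree v)) (used : List (Sym2 V))
    (husede : ∀ v : V, Even (used.countP (fun e => v ∈ e)))
    (husub : ∀ e ∈ used, e ∈ G.edgeSet) :
    ∀ (n : ℕ) {x y : V} (t : G.Walk x y), t.IsTrail → t.edges ≠ [] →
      (used ++ t.edges).Nodup →
      G.edgeFinset.card ≤ n + t.edges.length + used.length →
      ∃ q : G.Walk x x, q.IsTrail ∧ q.edges ≠ [] ∧ ∀ e ∈ q.edges, e ∉ used := by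
  intro n
  induction n with
  | zero =>
    intro x y t ht htne hnd hbound
    by_cases hxy : x = y
    · subst hxy
      exact ⟨t, ht, htne, fun e he heu => (List.nodup_append.mp hnd).2.2 e heu e he rfl⟩
    · exfalso
      have hodd : ¬ Even ((used ++ t.edges).countP (fun e => y ∈ e)) := by
        rw [List.countP_append, Nat.even_add]
        have h1 : Even (used.countP (fun e => y ∈ e)) := husede y
        have h2 : ¬ Even (t.edges.countP (fun e => y ∈ e)) := by
          rw [ht.even_countP_edges_iff y]
          simp [hxy]
        tauto
      obtain ⟨z, hz, hnmem⟩ := exists_adj_notMem (used ++ t.edges) hnd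
        (by intro e he; rcases List.mem_append.mp he with h | h
            exacts [husub e h, t.edges_subset_edgeSet h]) hodd (hdeg y)
      have hcov := covers_of_long (G := G) (used ++ t.edges) hnd
        (by intro e he; rcases List.mem_append.mp he with h | h
            exacts [husub e h, t.edges_subset_edgeSet h])
        (by simp only [List.length_append]; omega)
      exact hnmem (hcov _ (G.mem_edgeSet.mpr hz))
  | succ n ih =>
    intro x y t ht htne hnd hbound
    by_cases hxy : x = y
    · subst hxy
      exact ⟨t, ht, htne, fun e he heu => (List.nodup_append.mp hnd).2.2 e heu e he rfl⟩
    · have hodd : ¬ Even ((used ++ t.edges).countP (fun e => y ∈ e)) := by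
        rw [List.countP_append, Nat.even_add]
        have h1 : Even (used.countP (fun e => y ∈ e)) := husede y
        have h2 : ¬ Even (t.edges.countP (fun e => y ∈ e)) := by
          rw [ht.even_countP_edges_iff y]
          simp [hxy]
        tauto
      obtain ⟨z, hz, hnmem⟩ := exists_adj_notMem (used ++ t.edges) hnd
        (by intro e he; rcases List.mem_append.mp he with h | h
            exacts [husub e h, t.edges_subset_edgeSet h]) hodd (hdeg y)
      have hnm_used : s(y,z) ∉ used := fun h => hnmem (List.mem_append.mpr (Or.inl h))
      have hnm_t : s(y,z) ∉ t.edges := fun h => hnmem (List.mem_append.mpr (Or.inr h))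
      have hedges : (t.concat hz).edges = t.edges ++ [s(y,z)] := by
        rw [SimpleGraph.Walk.edges_concat, List.concat_eq_append]
      have ht' : (t.concat hz).IsTrail := by
        rw [SimpleGraph.Walk.isTrail_def, hedges]
        exact List.Nodup.append ht.edges_nodup (List.nodup_singleton _)
          (by simpa using hnm_t)
      have hnd' : (used ++ (t.concat hz).edges).Nodup := by
        rw [hedges, ← List.append_assoc]
        refine List.Nodup.append hnd (List.nodup_singleton _) ?_
        simpa using hnmem
      refine ih (t.concat hz) ht' (by simp [hedges]) hnd' ?_
      rw [hedges, List.length_append]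
      simpa [Nat.add_comm, Nat.add_left_comm, Nat.add_assoc] using hbound

lemma exists_support_unused {u : V} (p : G.Walk u u) :
    ∀ {a w : V} (_ : G.Walk a w), w ∈ p.support →
      (∃ b, G.Adj a b ∧ s(a, b) ∉ p.edges) →
      ∃ x, x ∈ p.support ∧ ∃ b, G.Adj x b ∧ s(x, b) ∉ p.edges := by
  intro a w r
  induction r with
  | nil => exact fun hw hab => ⟨_, hw, hab⟩
  | @cons a c w h r ih =>
    intro hw hab
    by_cases hmem : s(a, c) ∈ p.edges
    · exact ⟨a, p.fst_mem_support_of_mem_edges hmem, hab⟩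
    · exact ih hw ⟨a, h.symm, by rwa [Sym2.eq_swap]⟩

lemma euler_aux (hconn : G.Connected) (hdeg : ∀ v, Even (G.degree v)) :
    ∀ (m : ℕ) {u : V} (p : G.Walk u u), p.IsTrail →
      G.edgeFinset.card ≤ m + p.edges.length →
      ∃ q : G.Walk u u, q.IsEulerian := by
  intro m
  induction m with
  | zero =>
    intro u p hp hbound
    refine ⟨p, hp.isEulerian_of_forall_mem ?_⟩
    exact covers_of_long p.edges hp.edges_nodup (fun e he => p.edges_subset_edgeSet he)
      (by omega)
  | succ m ih =>
    intro u p hp hbound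
    by_cases hall : ∀ e ∈ G.edgeSet, e ∈ p.edges
    · exact ⟨p, hp.isEulerian_of_forall_mem hall⟩
    · push_neg at hall
      obtain ⟨e0, he0, he0n⟩ := hall
      induction e0 using Sym2.ind with
      | _ a b =>
      have hadj : G.Adj a b := G.mem_edgeSet.mp he0
      obtain ⟨r⟩ := hconn.preconnected a u
      obtain ⟨x, hxsupp, z, hxz, hxzn⟩ :=
        exists_support_unused p r p.start_mem_support ⟨b, hadj, he0n⟩
      -- closed trail from x avoiding p.edges
      have husede : ∀ v : V, Even (p.edges.countP fun e => v ∈ e) := by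
        intro v
        rw [hp.even_countP_edges_iff v]
        simp
      have hndstart : (p.edges ++ (Walk.cons hxz Walk.nil).edges).Nodup := by
        simp only [Walk.edges_cons, Walk.edges_nil]
        refine List.Nodup.append hp.edges_nodup (List.nodup_singleton _) (by simpa using hxzn)
      obtain ⟨q, hq, hqne, hqdisj⟩ := exists_closed_trail hdeg p.edges husede
        (fun e he => p.edges_subset_edgeSet he) G.edgeFinset.card
        (Walk.cons hxz Walk.nil) (by simp [Walk.isTrail_def]) (by simp) hndstart
        (by simp; omega)
      -- splice
      set p' : G.Walk u u := (p.takeUntil x hxsupp).append (q.append (p.dropUntil x hxsupp))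
        with hp'
      have hedges : p'.edges = (p.takeUntil x hxsupp).edges ++
          (q.edges ++ (p.dropUntil x hxsupp).edges) := by
        rw [hp', Walk.edges_append, Walk.edges_append]
      have htd : (p.takeUntil x hxsupp).edges ++ (p.dropUntil x hxsupp).edges = p.edges := by
        rw [← Walk.edges_append, Walk.take_spec]
      have hperm : p'.edges.Perm (q.edges ++ p.edges) := by
        rw [hedges, ← htd, ← List.append_assoc, ← List.append_assoc]
        exact List.perm_append_comm.append_right _
      have hp'trail : p'.IsTrail := by
        rw [Walk.isTrail_def]
        refine List.Perm.nodup hperm.symm ?_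
        exact List.Nodup.append hq.edges_nodup hp.edges_nodup
          (fun e he1 he2 => hqdisj e he1 he2)
      have hlen : p'.edges.length = q.edges.length + p.edges.length := by
        rw [hperm.length_eq, List.length_append]
      refine ih p' hp'trail ?_
      have : 1 ≤ q.edges.length := by
        cases hqe : q.edges with
        | nil => exact absurd hqe hqne
        | cons _ _ => simp
      omega

theorem exists_eulerian (hconn : G.Connected) (hdeg : ∀ v, Even (G.degree v)) :
    ∃ (u : V) (p : G.Walk u u), p.IsEulerian := by
  obtain ⟨u⟩ := hconn.nonempty
  obtain ⟨q, hq⟩ := euler_aux hconn hdeg G.edgeFinset.card (Walk.nil' u)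
    (by simp [Walk.isTrail_def]) (by simp)
  exact ⟨u, q, hq⟩


lemma card_filter_mem_eq_two {e : Sym2 V} (he : e ∈ G.edgeSet) :
    (Finset.univ.filter (fun v : V => v ∈ e)).card = 2 := by
  induction e using Sym2.ind with
  | _ a b =>
    have hab : a ≠ b := G.ne_of_adj (G.mem_edgeSet.mp he)
    have : Finset.univ.filter (fun v : V => v ∈ s(a, b)) = {a, b} := by
      ext v; simp [Sym2.mem_iff]
    rw [this, Finset.card_insert_of_notMem (by simpa using hab), Finset.card_singleton]

lemma sum_card_filter (P : Sym2 V → Prop) [DecidablePred P] :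
    ∑ v : V, ((G.incidenceFinset v).filter P).card =
      2 * (G.edgeFinset.filter P).card := by
  have h1 : ∀ v : V, ((G.incidenceFinset v).filter P).card =
      ∑ e ∈ G.edgeFinset.filter P, (if v ∈ e then 1 else 0) := by
    intro v
    rw [G.incidenceFinset_eq_filter v, Finset.filter_comm, Finset.card_filter]
  simp only [h1]
  rw [Finset.sum_comm]
  have h2 : ∀ e ∈ G.edgeFinset.filter P, (∑ v : V, if v ∈ e then 1 else 0) = 2 := by
    intro e he
    rw [← Finset.card_filter]
    exact card_filter_mem_eq_two (mem_edgeFinset.mp (Finset.mem_filter.mp he).1)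
  rw [Finset.sum_congr rfl h2, Finset.sum_const, smul_eq_mul, mul_comm]

end EvenColouring


/-- Even Colouring: a finite connected simple graph all of whose
vertices have even degree admits an edge 2-colouring (black = `true`,
white = `false`) in which every vertex is incident to equally many black and
white edges, if and only if the total number of edges is even. -/
theorem even_colouring_iff_even_edges {V : Type*} [Fintype V] [DecidableEq V]
    (G : SimpleGraph V) [DecidableRel G.Adj]
    (hconn : G.Connected) (hdeg : ∀ v : V, Even (G.degree v)) :
    (∃ c : Sym2 V → Bool, ∀ v : V,
        ((G.incidenceFinset v).filter (fun e => c e = true)).card =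
          ((G.incidenceFinset v).filter (fun e => c e = false)).card) ↔
      Even G.edgeFinset.card := by
  classical
  constructor
  · rintro ⟨c, hc⟩
    have hsum : ∑ v : V, ((G.incidenceFinset v).filter (fun e => c e = true)).card
        = ∑ v : V, ((G.incidenceFinset v).filter (fun e => c e = false)).card :=
      Finset.sum_congr rfl (fun v _ => hc v)
    rw [EvenColouring.sum_card_filter (G := G) (fun e => c e = true),
      EvenColouring.sum_card_filter (G := G) (fun e => c e = false)] at hsum
    have hsplit := Finset.card_filter_add_card_filter_not
      (s := G.edgeFinset) (p := fun e => c e = true)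
    have hcong : G.edgeFinset.filter (fun e => ¬ (c e = true))
        = G.edgeFinset.filter (fun e => c e = false) :=
      Finset.filter_congr (fun e _ => by simp)
    rw [hcong] at hsplit
    exact ⟨(G.edgeFinset.filter (fun e => c e = true)).card, by omega⟩
  · intro hev
    obtain ⟨u, p, hp⟩ := EvenColouring.exists_eulerian hconn hdeg
    have hnd : p.edges.Nodup := hp.isTrail.edges_nodup
    have hLfin : p.edges.toFinset = G.edgeFinset := by
      ext e
      rw [List.mem_toFinset, SimpleGraph.mem_edgeFinset, hp.mem_edges_iff]
    have hLlen : p.edges.length = G.edgeFinset.card := by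
      rw [← hLfin, List.toFinset_card_of_nodup hnd]
    have hevlen : Even p.length := by
      rw [← SimpleGraph.Walk.length_edges, hLlen]
      exact hev
    refine ⟨EvenColouring.acol true p.edges true, fun v => ?_⟩
    have h0 : EvenColouring.dsum v p.edges = 0 := EvenColouring.dsum_closed_even v u p hevlen
    have hkey := EvenColouring.countP_acol v p.edges hnd true
    rw [h0] at hkey
    simp only [if_true] at hkey
    have hconv : ∀ b : Bool,
        ((G.incidenceFinset v).filter (fun e => EvenColouring.acol true p.edges true e = b)).card
          = p.edges.countP (fun e => decide (v ∈ e ∧ EvenColouring.acol true p.edges true e = b)) := by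
      intro b
      rw [G.incidenceFinset_eq_filter v, Finset.filter_filter, ← hLfin,
        EvenColouring.card_toFinset_filter p.edges hnd _]
    rw [hconv true, hconv false]
    omega
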